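/- Let (K,S) be a measurable space and f,g : K → [0,∞)×[0,∞) measurable in the lexicographic sense. Then f+g (with the lexicographic-max addition) is measurable. -/

import Mathlib

open MeasureTheory
open scoped NNReal ENNReal

noncomputable section

abbrev Hv : Type := ℝ≥0 × ℝ≥0∞
abbrev Fv : Type := ℝ≥0 × ℝ≥0

/-- Lexicographic order `≤` on `[0,∞)×[0,∞]`. -/
def hle (x y : Hv) : Prop := x.1 < y.1 ∨ (x.1 = y.1 ∧ x.2 ≤ y.2)
/-- Lexicographic order `<` on `[0,∞)×[0,∞]`. -/
def hlt (x y : Hv) : Prop := x.1 < y.1 ∨ (x.1 = y.1 ∧ x.2 < y.2)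
/-- Lexicographic-max addition. -/
def hadd (x y : Hv) : Hv := if x.1 < y.1 then y else if y.1 < x.1 then x else (x.1, x.2 + y.2)
/-- Multiplication: `(0,0)` if either factor is `(0,0)`, else `(d1+d2, m1*m2)`. -/
def hmul (x y : Hv) : Hv := if x = (0,0) ∨ y = (0,0) then (0,0) else (x.1 + y.1, x.2 * y.2)

def flt (x y : Fv) : Prop := x.1 < y.1 ∨ (x.1 = y.1 ∧ x.2 < y.2)
def fle (x y : Fv) : Prop := x.1 < y.1 ∨ (x.1 = y.1 ∧ x.2 ≤ y.2)
def emb (x : Fv) : Hv := (x.1, (x.2 : ℝ≥0∞))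

/-- `f : K → [0,∞)×[0,∞)` is measurable iff `{x | f x < (d,m)} ∈ S` for all `(d,m)`. -/
def HMeas {K : Type*} [MeasurableSpace K] (f : K → Fv) : Prop :=
  ∀ d m : ℝ≥0, MeasurableSet {x | flt (f x) (d, m)}

/-- Infinite sum in `[0,∞)×[0,∞]`: `(D, ∑_{d_j = D} m_j)` where `D = sup d_i`. -/
def hSum (a : ℕ → Hv) : Hv :=
  (⨆ i, (a i).1, ∑' i, if (a i).1 = ⨆ j, (a j).1 then (a i).2 else 0)

/-- Finite sum (iterated lexicographic-max addition). -/
def hFinsum {n : ℕ} (v : Fin n → Hv) : Hv :=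
  (⨆ i, (v i).1, ∑ i, if (v i).1 = ⨆ j, (v j).1 then (v i).2 else 0)

/-- `μ` is an h-measure: `μ ∅ = (0,0)` and countable additivity. -/
def IsHMeasure {K : Type*} [MeasurableSpace K] (μ : Set K → Hv) : Prop :=
  μ ∅ = (0, 0) ∧
  ∀ A : ℕ → Set K, (∀ n, MeasurableSet (A n)) → Pairwise (Function.onFun Disjoint A) →
    μ (⋃ n, A n) = hSum fun n => μ (A n)

/-- The set of integrals of measurable simple functions `(0,0) ≤ g ≤ f`. -/
def hIntSet {K : Type*} [MeasurableSpace K] (μ : Set K → Hv) (f : K → Fv) : Set Hv :=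
  { v | ∃ (n : ℕ) (c : Fin n → Fv) (A : Fin n → Set K),
      (∀ i, MeasurableSet (A i)) ∧ Pairwise (Function.onFun Disjoint A) ∧
      (∀ i, ∀ x ∈ A i, fle (c i) (f x)) ∧
      v = hFinsum fun i => hmul (emb (c i)) (μ (A i)) }

/-- `v` is the least upper bound (w.r.t. `hle`) of `s`; `(H)∫ f dμ = v` means
`IsHLub (hIntSet μ f) v`. -/
def IsHLub (s : Set Hv) (v : Hv) : Prop :=
  (∀ w ∈ s, hle w v) ∧ ∀ u, (∀ w ∈ s, hle w u) → hle v u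

end

/-- Lexicographic-max addition on `[0,∞)×[0,∞)`. -/
noncomputable def fadd (x y : Fv) : Fv :=
  if x.1 < y.1 then y else if y.1 < x.1 then x else (x.1, x.2 + y.2)

section AddMeas

variable {K : Type*} [MeasurableSpace K] {f : K → Fv}

lemma hm_lt (hf : HMeas f) (d : ℝ≥0) : MeasurableSet {x | (f x).1 < d} := by
  have h := hf d 0
  have : {x | flt (f x) (d, 0)} = {x | (f x).1 < d} := by
    ext x; simp [flt]
  rwa [this] at h

lemma hm_le (hf : HMeas f) (d : ℝ≥0) : MeasurableSet {x | (f x).1 ≤ d} := by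
  have heq : {x | (f x).1 ≤ d} = ⋂ n : ℕ, {x | (f x).1 < d + ((n : ℝ≥0) + 1)⁻¹} := by
    ext x
    simp only [Set.mem_iInter, Set.mem_setOf_eq]
    constructor
    · intro h n
      exact lt_of_le_of_lt h (lt_add_of_pos_right _ (by positivity))
    · intro h
      by_contra hd
      push_neg at hd
      obtain ⟨n, hn⟩ := exists_nat_one_div_lt (tsub_pos_of_lt hd)
      have h2 : d + ((n : ℝ≥0) + 1)⁻¹ < (f x).1 := by
        calc d + ((n : ℝ≥0) + 1)⁻¹ < d + ((f x).1 - d) := by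
              rw [one_div] at hn; exact (add_lt_add_iff_left d).mpr hn
          _ = (f x).1 := add_tsub_cancel_of_le hd.le
      exact absurd (h n) (not_lt.mpr h2.le)
  rw [heq]
  exact MeasurableSet.iInter fun n => hm_lt hf _

lemma hm_eq (hf : HMeas f) (d : ℝ≥0) : MeasurableSet {x | (f x).1 = d} := by
  have heq : {x | (f x).1 = d} = {x | (f x).1 ≤ d} \ {x | (f x).1 < d} := by
    ext x
    simp only [Set.mem_setOf_eq, Set.mem_diff, not_lt]
    constructor
    · rintro rfl; exact ⟨le_rfl, le_rfl⟩
    · rintro ⟨h1, h2⟩; exact le_antisymm h1 h2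
  rw [heq]
  exact (hm_le hf d).diff (hm_lt hf d)

lemma hm_eq_lt (hf : HMeas f) (d : ℝ≥0) (r : ℝ) :
    MeasurableSet {x | (f x).1 = d ∧ ((f x).2 : ℝ) < r} := by
  by_cases hr : 0 < r
  · have heq : {x | (f x).1 = d ∧ ((f x).2 : ℝ) < r}
        = {x | flt (f x) (d, r.toNNReal)} ∩ {x | (f x).1 < d}ᶜ := by
      ext x
      simp only [Set.mem_setOf_eq, Set.mem_inter_iff, Set.mem_compl_iff, flt, not_lt]
      have hc : (f x).2 < r.toNNReal ↔ ((f x).2 : ℝ) < r := by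
        rw [← NNReal.coe_lt_coe, Real.coe_toNNReal _ hr.le]
      constructor
      · rintro ⟨h1, h2⟩
        exact ⟨Or.inr ⟨h1, hc.mpr h2⟩, h1.ge⟩
      · rintro ⟨h1 | ⟨h1, h2⟩, h3⟩
        · exact absurd h1 (not_lt.mpr h3)
        · exact ⟨h1, hc.mp h2⟩
    rw [heq]
    exact (hf d r.toNNReal).inter (hm_lt hf d).compl
  · have heq : {x | (f x).1 = d ∧ ((f x).2 : ℝ) < r} = (∅ : Set K) := by
      ext x
      simp only [Set.mem_setOf_eq, Set.mem_empty_iff_false, iff_false, not_and]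
      intro _
      exact not_lt.mpr (le_trans (not_lt.mp hr) (f x).2.coe_nonneg)
    rw [heq]; exact MeasurableSet.empty

theorem add_measurable' {K : Type*} [MeasurableSpace K] (f g : K → Fv)
    (hf : HMeas f) (hg : HMeas g) : HMeas fun x => fadd (f x) (g x) := by
  intro d m
  have heq : {x | flt (fadd (f x) (g x)) (d, m)} =
      ({x | (f x).1 < d} ∩ {x | (g x).1 < d})
      ∪ ({x | (f x).1 = d ∧ ((f x).2 : ℝ) < m} ∩ {x | (g x).1 < d})
      ∪ ({x | (f x).1 < d} ∩ {x | (g x).1 = d ∧ ((g x).2 : ℝ) < m})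
      ∪ ⋃ q : ℚ, ({x | (f x).1 = d ∧ ((f x).2 : ℝ) < q}
          ∩ {x | (g x).1 = d ∧ ((g x).2 : ℝ) < m - q}) := by
    ext x
    set a := f x with ha
    set b := g x with hb
    simp only [Set.mem_setOf_eq, Set.mem_union, Set.mem_inter_iff, Set.mem_iUnion]
    constructor
    · intro h
      rcases lt_trichotomy a.1 b.1 with hab | hab | hab
      · rw [fadd, if_pos hab] at h
        rcases h with h | ⟨h1, h2⟩
        · exact Or.inl (Or.inl (Or.inl ⟨hab.trans h, h⟩))
        · exact Or.inl (Or.inr ⟨hab.trans_eq h1, h1, NNReal.coe_lt_coe.mpr h2⟩)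
      · rw [fadd, if_neg (not_lt.mpr hab.ge), if_neg (not_lt.mpr hab.le)] at h
        rcases h with h | ⟨h1, h2⟩
        · exact Or.inl (Or.inl (Or.inl ⟨h, hab ▸ h⟩))
        · -- a.1 = d, b.1 = d, a.2 + b.2 < m
          have hb1 : b.1 = d := hab ▸ h1
          have h2' : (a.2 : ℝ) + (b.2 : ℝ) < (m : ℝ) := by
            exact_mod_cast NNReal.coe_lt_coe.mpr h2
          obtain ⟨q, hq1, hq2⟩ := exists_rat_btwn (show (a.2 : ℝ) < m - b.2 by linarith)
          exact Or.inr ⟨q, ⟨h1, hq1⟩, hb1, by linarith⟩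
      · rw [fadd, if_neg (not_lt.mpr hab.le), if_pos hab] at h
        rcases h with h | ⟨h1, h2⟩
        · exact Or.inl (Or.inl (Or.inl ⟨h, hab.trans h⟩))
        · exact Or.inl (Or.inl (Or.inr ⟨⟨h1, NNReal.coe_lt_coe.mpr h2⟩, hab.trans_eq h1⟩))
    · intro h
      rcases h with ((⟨h1, h2⟩ | ⟨⟨h1, h2⟩, h3⟩) | ⟨h1, ⟨h2, h3⟩⟩) | ⟨q, ⟨h1, h2⟩, h3, h4⟩
      · -- a.1 < d and b.1 < d
        left
        rw [fadd]
        split_ifs <;> simp [h1, h2]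
      · -- a.1 = d, a.2 < m, b.1 < d
        have hba : b.1 < a.1 := h1 ▸ h3
        rw [fadd, if_neg (not_lt.mpr hba.le), if_pos hba]
        exact Or.inr ⟨h1, NNReal.coe_lt_coe.mp (by exact_mod_cast h2)⟩
      · -- a.1 < d, b.1 = d, b.2 < m
        have hab : a.1 < b.1 := h2 ▸ h1
        rw [fadd, if_pos hab]
        exact Or.inr ⟨h2, NNReal.coe_lt_coe.mp (by exact_mod_cast h3)⟩
      · -- a.1 = d = b.1, a.2 < q, b.2 < m - q
        have hab : a.1 = b.1 := h1.trans h3.symm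
        rw [fadd, if_neg (not_lt.mpr hab.ge), if_neg (not_lt.mpr hab.le)]
        refine Or.inr ⟨h1, ?_⟩
        have : ((a.2 + b.2 : ℝ≥0) : ℝ) < (m : ℝ) := by push_cast; linarith
        exact_mod_cast this
  rw [heq]
  refine (((((hm_lt hf d).inter (hm_lt hg d)).union
      ((hm_eq_lt hf d m).inter (hm_lt hg d))).union
      ((hm_lt hf d).inter (hm_eq_lt hg d m))).union
      (MeasurableSet.iUnion fun q => (hm_eq_lt hf d q).inter (hm_eq_lt hg d (m - q))))

end AddMeas

/-- The sum of two measurable functions is measurable. -/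
theorem add_measurable {K : Type*} [MeasurableSpace K] (f g : K → Fv)
    (hf : HMeas f) (hg : HMeas g) : HMeas fun x => fadd (f x) (g x) := by
  exact add_measurable' f g hf hg
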